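/- Let S ⊆ ℝⁿ be a nonempty compact convex set not containing the origin. Then the function J(τ) = E[dist²(X, τS)], where X ∼ N(0, Iₙ), is convex on [0, ∞). -/

import Mathlib

open MeasureTheory ProbabilityTheory

/-- The standard Gaussian measure on `ℝⁿ`. -/
noncomputable def stdGaussianPi (n : ℕ) : Measure (Fin n → ℝ) :=
  Measure.pi fun _ => gaussianReal 0 1

namespace Stmt15Aux

variable {n : ℕ} {S : Set (Fin n → ℝ)}

lemma set_eq (τ : ℝ) (x : Fin n → ℝ) :
    {r : ℝ | ∃ y ∈ S, r = ∑ i, (x i - τ * y i) ^ 2}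
      = (fun y => ∑ i, (x i - τ * y i) ^ 2) '' S := by
  ext r
  simp only [Set.mem_setOf_eq, Set.mem_image]
  constructor
  · rintro ⟨y, hy, rfl⟩; exact ⟨y, hy, rfl⟩
  · rintro ⟨y, hy, rfl⟩; exact ⟨y, hy, rfl⟩

lemma cont_phi (τ : ℝ) (x : Fin n → ℝ) :
    Continuous (fun y : Fin n → ℝ => ∑ i, (x i - τ * y i) ^ 2) := by
  fun_prop

lemma bdd (τ : ℝ) (x : Fin n → ℝ) :
    BddBelow {r : ℝ | ∃ y ∈ S, r = ∑ i, (x i - τ * y i) ^ 2} := by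
  refine ⟨0, ?_⟩
  rintro r ⟨y, hy, rfl⟩
  positivity

lemma nonempty_set (hne : S.Nonempty) (τ : ℝ) (x : Fin n → ℝ) :
    {r : ℝ | ∃ y ∈ S, r = ∑ i, (x i - τ * y i) ^ 2}.Nonempty := by
  obtain ⟨y, hy⟩ := hne
  exact ⟨_, y, hy, rfl⟩

lemma le_of_mem (τ : ℝ) (x : Fin n → ℝ) {y : Fin n → ℝ} (hy : y ∈ S) :
    sInf {r : ℝ | ∃ y ∈ S, r = ∑ i, (x i - τ * y i) ^ 2} ≤ ∑ i, (x i - τ * y i) ^ 2 :=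
  csInf_le (bdd τ x) ⟨y, hy, rfl⟩

lemma g_nonneg (hne : S.Nonempty) (τ : ℝ) (x : Fin n → ℝ) :
    0 ≤ sInf {r : ℝ | ∃ y ∈ S, r = ∑ i, (x i - τ * y i) ^ 2} := by
  refine le_csInf (nonempty_set hne τ x) ?_
  rintro r ⟨y, hy, rfl⟩
  positivity

lemma sInf_mem_aux (hne : S.Nonempty) (hcomp : IsCompact S) (τ : ℝ) (x : Fin n → ℝ) :
    ∃ y ∈ S, sInf {r : ℝ | ∃ y ∈ S, r = ∑ i, (x i - τ * y i) ^ 2}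
      = ∑ i, (x i - τ * y i) ^ 2 := by
  obtain ⟨y, hy, hyeq⟩ := (hcomp.image (cont_phi τ x)).sInf_mem (hne.image _)
  exact ⟨y, hy, by rw [set_eq]; exact hyeq.symm⟩

/-- Pointwise convexity of the squared distance to `τS` as a function of `τ`. -/
lemma key (hne : S.Nonempty) (hcomp : IsCompact S) (hconv : Convex ℝ S)
    {τ₁ τ₂ a b : ℝ} (h₁ : 0 ≤ τ₁) (h₂ : 0 ≤ τ₂)
    (ha : 0 ≤ a) (hb : 0 ≤ b) (hab : a + b = 1) (x : Fin n → ℝ) :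
    sInf {r : ℝ | ∃ y ∈ S, r = ∑ i, (x i - (a * τ₁ + b * τ₂) * y i) ^ 2}
      ≤ a * sInf {r : ℝ | ∃ y ∈ S, r = ∑ i, (x i - τ₁ * y i) ^ 2}
        + b * sInf {r : ℝ | ∃ y ∈ S, r = ∑ i, (x i - τ₂ * y i) ^ 2} := by
  obtain ⟨y₁, hy₁, e₁⟩ := sInf_mem_aux hne hcomp τ₁ x
  obtain ⟨y₂, hy₂, e₂⟩ := sInf_mem_aux hne hcomp τ₂ x
  set τ := a * τ₁ + b * τ₂ with hτ
  have hτ0 : 0 ≤ τ := by positivity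
  rw [e₁, e₂]
  rcases eq_or_lt_of_le hτ0 with h0τ | h0τ
  · -- τ = 0 : both a*τ₁ = 0 and b*τ₂ = 0
    have haτ₁ : a * τ₁ = 0 := by nlinarith [mul_nonneg ha h₁, mul_nonneg hb h₂]
    have hbτ₂ : b * τ₂ = 0 := by nlinarith [mul_nonneg ha h₁, mul_nonneg hb h₂]
    obtain ⟨y₀, hy₀⟩ := id hne
    have hle : sInf {r : ℝ | ∃ y ∈ S, r = ∑ i, (x i - τ * y i) ^ 2} ≤ ∑ i, (x i) ^ 2 := by
      have := le_of_mem (S := S) τ x hy₀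
      simpa [← h0τ] using this
    have ea : a * ∑ i, (x i - τ₁ * y₁ i) ^ 2 = a * ∑ i, (x i) ^ 2 := by
      rcases mul_eq_zero.mp haτ₁ with h | h
      · simp [h]
      · simp [h]
    have eb : b * ∑ i, (x i - τ₂ * y₂ i) ^ 2 = b * ∑ i, (x i) ^ 2 := by
      rcases mul_eq_zero.mp hbτ₂ with h | h
      · simp [h]
      · simp [h]
    rw [ea, eb, ← add_mul, hab, one_mul]
    exact hle
  · -- τ > 0
    set y : Fin n → ℝ := fun i => (a * τ₁ * y₁ i + b * τ₂ * y₂ i) / τ with hy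
    have hyS : y ∈ S := by
      have hmem := hconv hy₁ hy₂ (by positivity : 0 ≤ a * τ₁ / τ) (by positivity : 0 ≤ b * τ₂ / τ)
        (by field_simp; exact hτ.symm : a * τ₁ / τ + b * τ₂ / τ = 1)
      convert hmem using 1
      funext i
      simp only [hy, Pi.add_apply, Pi.smul_apply, smul_eq_mul]
      field_simp
    have hτy : ∀ i, τ * y i = a * (τ₁ * y₁ i) + b * (τ₂ * y₂ i) := by
      intro i
      simp only [hy]
      field_simp
    calc sInf {r : ℝ | ∃ y ∈ S, r = ∑ i, (x i - τ * y i) ^ 2}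
        ≤ ∑ i, (x i - τ * y i) ^ 2 := le_of_mem τ x hyS
      _ ≤ ∑ i, (a * (x i - τ₁ * y₁ i) ^ 2 + b * (x i - τ₂ * y₂ i) ^ 2) := by
          refine Finset.sum_le_sum fun i _ => ?_
          have hb' : b = 1 - a := by linarith
          rw [hτy i, hb']
          nlinarith [mul_nonneg (mul_nonneg ha (by linarith : (0:ℝ) ≤ 1 - a))
            (sq_nonneg ((x i - τ₁ * y₁ i) - (x i - τ₂ * y₂ i)))]
      _ = a * ∑ i, (x i - τ₁ * y₁ i) ^ 2 + b * ∑ i, (x i - τ₂ * y₂ i) ^ 2 := by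
          rw [Finset.sum_add_distrib, Finset.mul_sum, Finset.mul_sum]

/-- The map from the ordinary pi type to Euclidean space. -/
noncomputable def eu (n : ℕ) : (Fin n → ℝ) → EuclideanSpace ℝ (Fin n) :=
  fun x => (WithLp.equiv 2 (Fin n → ℝ)).symm x

lemma eu_cont : Continuous (eu n) := PiLp.continuous_toLp 2 (fun _ : Fin n => ℝ)

lemma dist_sq (x z : Fin n → ℝ) :
    dist (eu n x) (eu n z) ^ 2 = ∑ i, (x i - z i) ^ 2 := by
  rw [EuclideanSpace.dist_eq, Real.sq_sqrt (by positivity)]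
  refine Finset.sum_congr rfl fun i _ => ?_
  simp [eu, Real.dist_eq, sq_abs, PiLp.toLp_apply]

lemma g_eq_infDist (hne : S.Nonempty) (hcomp : IsCompact S) (τ : ℝ) (x : Fin n → ℝ) :
    sInf {r : ℝ | ∃ y ∈ S, r = ∑ i, (x i - τ * y i) ^ 2}
      = (Metric.infDist (eu n x) ((fun y => eu n (fun i => τ * y i)) '' S)) ^ 2 := by
  set K := (fun y => eu n (fun i => τ * y i)) '' S with hK
  have hKc : IsCompact K := hcomp.image (eu_cont.comp (by fun_prop))
  have hKne : K.Nonempty := hne.image _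
  obtain ⟨z, hzK, hz⟩ := hKc.exists_infDist_eq_dist hKne (eu n x)
  obtain ⟨y₀, hy₀, rfl⟩ := hzK
  refine le_antisymm ?_ ?_
  · refine csInf_le (bdd τ x) ⟨y₀, hy₀, ?_⟩
    rw [hz, dist_sq]
  · refine le_csInf (nonempty_set hne τ x) ?_
    rintro r ⟨y, hy, rfl⟩
    have hmem : eu n (fun i => τ * y i) ∈ K := ⟨y, hy, rfl⟩
    have h1 : Metric.infDist (eu n x) K ≤ dist (eu n x) (eu n (fun i => τ * y i)) :=
      Metric.infDist_le_dist_of_mem hmem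
    have h2 := pow_le_pow_left₀ Metric.infDist_nonneg h1 2
    rw [dist_sq] at h2
    exact h2

lemma cont_g (hne : S.Nonempty) (hcomp : IsCompact S) (τ : ℝ) :
    Continuous (fun x : Fin n → ℝ =>
      sInf {r : ℝ | ∃ y ∈ S, r = ∑ i, (x i - τ * y i) ^ 2}) := by
  have heq : (fun x : Fin n → ℝ =>
      sInf {r : ℝ | ∃ y ∈ S, r = ∑ i, (x i - τ * y i) ^ 2})
      = fun x => (Metric.infDist (eu n x) ((fun y => eu n (fun i => τ * y i)) '' S)) ^ 2 :=
    funext fun x => g_eq_infDist hne hcomp τ x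
  rw [heq]
  exact ((Metric.continuous_infDist_pt _).comp eu_cont).pow 2

lemma integrable_pow_gaussian (k : ℕ) :
    Integrable (fun t : ℝ => t ^ k) (gaussianReal 0 1) := by
  rw [gaussianReal_of_var_ne_zero 0 one_ne_zero]
  rw [integrable_withDensity_iff (measurable_gaussianPDF 0 1)
    (Filter.Eventually.of_forall fun x => ENNReal.ofReal_lt_top)]
  have heq : (fun x : ℝ => x ^ k * (gaussianPDF 0 1 x).toReal)
      = fun x : ℝ => (√(2 * Real.pi))⁻¹ * (x ^ (k : ℝ) * Real.exp (-(2⁻¹ : ℝ) * x ^ 2)) := by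
    funext x
    rw [gaussianPDF, ENNReal.toReal_ofReal (gaussianPDFReal_nonneg 0 1 x), gaussianPDFReal,
      Real.rpow_natCast]
    push_cast
    ring_nf
  rw [heq]
  exact (integrable_rpow_mul_exp_neg_mul_sq (by norm_num : (0:ℝ) < 2⁻¹)
    (by exact_mod_cast neg_one_lt_zero.trans_le (Nat.cast_nonneg k) : (-1 : ℝ) < (k : ℝ))).const_mul _

lemma integrable_sub_sq_gaussian (c : ℝ) :
    Integrable (fun t : ℝ => (t - c) ^ 2) (gaussianReal 0 1) := by
  have h : Integrable (fun t : ℝ => t ^ 2 + (-2 * c) * t ^ 1 + c ^ 2) (gaussianReal 0 1) :=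
    ((integrable_pow_gaussian 2).add ((integrable_pow_gaussian 1).const_mul _)).add
      (integrable_const _)
  have heq : (fun t : ℝ => (t - c) ^ 2) = fun t : ℝ => t ^ 2 + (-2 * c) * t ^ 1 + c ^ 2 := by
    funext t; ring
  rw [heq]
  exact h

lemma measurePreserving_eval (n : ℕ) (i : Fin n) :
    MeasurePreserving (fun x : Fin n → ℝ => x i) (stdGaussianPi n) (gaussianReal 0 1) := by
  refine ⟨measurable_pi_apply i, ?_⟩
  ext s hs
  rw [Measure.map_apply (measurable_pi_apply i) hs]
  have hpre : (fun x : Fin n → ℝ => x i) ⁻¹' s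
      = Set.pi Set.univ (Function.update (fun _ : Fin n => (Set.univ : Set ℝ)) i s) :=
    Set.eval_preimage
  rw [hpre, stdGaussianPi, Measure.pi_pi]
  rw [Finset.prod_eq_single i]
  · simp
  · intro j _ hj
    simp [Function.update_of_ne hj]
  · simp

lemma integrable_comp_eval {f : ℝ → ℝ} (hf : Integrable f (gaussianReal 0 1)) (i : Fin n) :
    Integrable (fun x : Fin n → ℝ => f (x i)) (stdGaussianPi n) :=
  ((measurePreserving_eval n i).integrable_comp hf.aestronglyMeasurable).mpr hf

lemma integrable_bound (y₀ : Fin n → ℝ) (τ : ℝ) :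
    Integrable (fun x : Fin n → ℝ => ∑ i, (x i - τ * y₀ i) ^ 2) (stdGaussianPi n) := by
  refine integrable_finset_sum _ fun i _ => ?_
  exact integrable_comp_eval (integrable_sub_sq_gaussian (τ * y₀ i)) i

lemma integrable_g (hne : S.Nonempty) (hcomp : IsCompact S) (τ : ℝ) :
    Integrable (fun x : Fin n → ℝ =>
      sInf {r : ℝ | ∃ y ∈ S, r = ∑ i, (x i - τ * y i) ^ 2}) (stdGaussianPi n) := by
  obtain ⟨y₀, hy₀⟩ := id hne
  refine Integrable.mono' (integrable_bound y₀ τ)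
    ((cont_g hne hcomp τ).aestronglyMeasurable) ?_
  filter_upwards with x
  rw [Real.norm_eq_abs, abs_of_nonneg (g_nonneg hne τ x)]
  exact le_of_mem τ x hy₀

end Stmt15Aux

open Stmt15Aux

/-- For a nonempty compact convex `S ⊆ ℝⁿ` with `0 ∉ S`, the function
`J(τ) = E[dist²(X, τS)]` (standard Gaussian `X`, Euclidean distance) is convex on `[0,∞)`. -/
theorem stmt15 (n : ℕ) (S : Set (Fin n → ℝ)) (hne : S.Nonempty)
    (hcomp : IsCompact S) (hconv : Convex ℝ S) (h0 : (0 : Fin n → ℝ) ∉ S) :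
    ConvexOn ℝ (Set.Ici (0:ℝ)) (fun τ =>
      ∫ x, sInf {r : ℝ | ∃ y ∈ S, r = ∑ i, (x i - τ * y i) ^ 2} ∂(stdGaussianPi n)) := by
  refine ⟨convex_Ici 0, ?_⟩
  intro τ₁ h₁ τ₂ h₂ a b ha hb hab
  simp only [smul_eq_mul]
  have hInt₁ := integrable_g hne hcomp τ₁
  have hInt₂ := integrable_g hne hcomp τ₂
  have hInt := integrable_g hne hcomp (a * τ₁ + b * τ₂)
  calc (∫ x, sInf {r : ℝ | ∃ y ∈ S, r = ∑ i, (x i - (a * τ₁ + b * τ₂) * y i) ^ 2}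
          ∂(stdGaussianPi n))
      ≤ ∫ x, (a * sInf {r : ℝ | ∃ y ∈ S, r = ∑ i, (x i - τ₁ * y i) ^ 2}
          + b * sInf {r : ℝ | ∃ y ∈ S, r = ∑ i, (x i - τ₂ * y i) ^ 2}) ∂(stdGaussianPi n) :=
        integral_mono hInt ((hInt₁.const_mul a).add (hInt₂.const_mul b))
          (fun x => key hne hcomp hconv (Set.mem_Ici.mp h₁) (Set.mem_Ici.mp h₂) ha hb hab x)
    _ = a * (∫ x, sInf {r : ℝ | ∃ y ∈ S, r = ∑ i, (x i - τ₁ * y i) ^ 2} ∂(stdGaussianPi n))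
          + b * ∫ x, sInf {r : ℝ | ∃ y ∈ S, r = ∑ i, (x i - τ₂ * y i) ^ 2} ∂(stdGaussianPi n) := by
        rw [integral_add (hInt₁.const_mul a) (hInt₂.const_mul b), integral_const_mul,
          integral_const_mul]
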